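/- Let X be a compact metric space, f : X → X continuous, and x, y ∈ X. Suppose (q_i) is a strictly increasing sequence of positive integers with q_{i+1} - q_i ≤ M for all i. If liminf_{n→∞} (1/n)#{0 ≤ i < n : d(f^{q_i} x, f^{q_i} y) < ε} = 0 for some ε > 0, then there exists s > 0 with liminf_{n→∞} (1/n)#{0 ≤ i < n : d(f^i x, f^i y) < s} = 0. -/

import Mathlib

open Filter Set
open scoped Classical

/-- Lower density of times `i < n` with `dist (f^[i] x) (f^[i] y) < t`. -/
noncomputable def ldens {X : Type*} [MetricSpace X] (f : X → X) (x y : X) (t : ℝ) : ℝ :=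
  Filter.liminf (fun n : ℕ =>
    (((Finset.range n).filter (fun i => dist (f^[i] x) (f^[i] y) < t)).card : ℝ) / n)
    Filter.atTop

/-- Upper density of times `i < n` with `dist (f^[i] x) (f^[i] y) < t`. -/
noncomputable def udens {X : Type*} [MetricSpace X] (f : X → X) (x y : X) (t : ℝ) : ℝ :=
  Filter.limsup (fun n : ℕ =>
    (((Finset.range n).filter (fun i => dist (f^[i] x) (f^[i] y) < t)).card : ℝ) / n)
    Filter.atTop

/-- Lower density along the sequence of times `q i`. -/
noncomputable def ldensSeq {X : Type*} [MetricSpace X] (f : X → X) (q : ℕ → ℕ)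
    (x y : X) (t : ℝ) : ℝ :=
  Filter.liminf (fun n : ℕ =>
    (((Finset.range n).filter (fun i => dist (f^[q i] x) (f^[q i] y) < t)).card : ℝ) / n)
    Filter.atTop

/-- Upper density along the sequence of times `q i`. -/
noncomputable def udensSeq {X : Type*} [MetricSpace X] (f : X → X) (q : ℕ → ℕ)
    (x y : X) (t : ℝ) : ℝ :=
  Filter.limsup (fun n : ℕ =>
    (((Finset.range n).filter (fun i => dist (f^[q i] x) (f^[q i] y) < t)).card : ℝ) / n)
    Filter.atTop

theorem stmt_2 {X : Type*} [MetricSpace X] [CompactSpace X]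
    (f : X → X) (hf : Continuous f) (x y : X)
    (q : ℕ → ℕ) (hq : StrictMono q) (hqpos : ∀ i, 0 < q i)
    (M : ℕ) (hgap : ∀ i, q (i + 1) - q i ≤ M)
    (ε : ℝ) (hε : 0 < ε) (h : ldensSeq f q x y ε = 0) :
    ∃ s : ℝ, 0 < s ∧ ldens f x y s = 0 := by
  have hM1 : 1 ≤ M := by
    have h1 := hgap 0
    have h2 : q 0 < q (0 + 1) := hq (by omega)
    omega
  -- choose `s` by uniform continuity of all iterates `f^[r]`, `r ≤ M`
  have huc : ∀ r : ℕ, ∃ s > 0, ∀ a b : X, dist a b < s → dist (f^[r] a) (f^[r] b) < ε := by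
    intro r
    have h1 : UniformContinuous (f^[r]) :=
      CompactSpace.uniformContinuous_of_continuous (hf.iterate r)
    obtain ⟨δ, hδ, hd⟩ := Metric.uniformContinuous_iff.mp h1 ε hε
    exact ⟨δ, hδ, fun a b hab => hd hab⟩
  choose S hSpos hS using huc
  set s : ℝ := (Finset.range (M + 1)).inf' ⟨0, by simp⟩ S with hsdef
  have hspos : 0 < s := by
    rw [hsdef]
    exact (Finset.lt_inf'_iff ..).mpr fun r _ => hSpos r
  have hkey : ∀ i r : ℕ, r ≤ M → dist (f^[i] x) (f^[i] y) < s →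
      dist (f^[r + i] x) (f^[r + i] y) < ε := by
    intro i r hr hd
    rw [Function.iterate_add_apply, Function.iterate_add_apply]
    refine hS r _ _ (lt_of_lt_of_le hd ?_)
    exact Finset.inf'_le _ (Finset.mem_range.mpr (by omega))
  refine ⟨s, hspos, ?_⟩
  -- the counting inequality
  have hcount : ∀ n : ℕ,
      ((Finset.range n).filter (fun i => dist (f^[i] x) (f^[i] y) < s)).card
        ≤ q 0 + M * ((Finset.range (n + M)).filter
            (fun j => dist (f^[q j] x) (f^[q j] y) < ε)).card := by
    intro n
    have hex : ∀ i : ℕ, ∃ j, i ≤ q j := fun i => ⟨i, hq.le_apply⟩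
    set J : ℕ → ℕ := fun i => Nat.find (hex i) with hJdef
    have hJle : ∀ i, i ≤ q (J i) := fun i => Nat.find_spec (hex i)
    have hJmin : ∀ i j, j < J i → q j < i := by
      intro i j hj
      have := Nat.find_min (hex i) hj
      omega
    have hclose : ∀ i, q 0 ≤ i → q (J i) ≤ i + M := by
      intro i hi
      rcases Nat.eq_zero_or_pos (J i) with h0 | hpos
      · have h1 := hJle i
        rw [h0] at h1 ⊢
        omega
      · obtain ⟨k, hk⟩ : ∃ k, J i = k + 1 := ⟨J i - 1, by omega⟩
        have h1 : q k < i := hJmin i k (by omega)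
        have h2 := hgap k
        have h3 : q k < q (k + 1) := hq (by omega)
        rw [hk]; omega
    set A := (Finset.range n).filter (fun i => dist (f^[i] x) (f^[i] y) < s) with hA
    set T := (Finset.range (n + M)).filter
        (fun j => dist (f^[q j] x) (f^[q j] y) < ε) with hT
    set A' := A.filter (fun i => q 0 ≤ i) with hA'
    have hsplit : A.card ≤ q 0 + A'.card := by
      have h2 := Finset.card_filter_add_card_filter_not
        (s := A) (p := fun i => q 0 ≤ i)
      simp only [not_le] at h2
      rw [← hA'] at h2
      have h1 : A.filter (fun i => i < q 0) ⊆ Finset.range (q 0) := by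
        intro i hi
        simp only [Finset.mem_filter] at hi
        exact Finset.mem_range.mpr (by omega)
      have h3 := Finset.card_le_card h1
      simp only [Finset.card_range] at h3
      omega
    refine hsplit.trans (Nat.add_le_add_left ?_ _)
    apply Finset.card_le_mul_card_image_of_maps_to (f := J) (t := T)
    · intro i hi
      simp only [hA', hA, Finset.mem_filter, Finset.mem_range] at hi
      obtain ⟨⟨hin, hid⟩, hi0⟩ := hi
      have hc := hclose i hi0
      have hle := hJle i
      have hr : q (J i) = (q (J i) - i) + i := by omega
      have hdist : dist (f^[q (J i)] x) (f^[q (J i)] y) < ε := by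
        rw [hr]; exact hkey i _ (by omega) hid
      have hJb : J i ≤ q (J i) := hq.le_apply
      simp only [hT, Finset.mem_filter, Finset.mem_range]
      exact ⟨by omega, hdist⟩
    · intro b _
      have hsub : (A'.filter (fun i => J i = b)) ⊆ Finset.Ioc (q b - M) (q b) := by
        intro i hi
        simp only [hA', hA, Finset.mem_filter] at hi
        obtain ⟨⟨_, hi0⟩, hJb⟩ := hi
        have hle := hJle i
        rw [hJb] at hle
        rcases Nat.eq_zero_or_pos b with h0 | hpos
        · subst h0
          have := hqpos 0
          exact Finset.mem_Ioc.mpr ⟨by omega, hle⟩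
        · obtain ⟨k, hk⟩ : ∃ k, b = k + 1 := ⟨b - 1, by omega⟩
          have h1 : q k < i := hJmin i k (by omega)
          have h2 := hgap k
          subst hk
          exact Finset.mem_Ioc.mpr ⟨by omega, hle⟩
      have := Finset.card_le_card hsub
      rw [Nat.card_Ioc] at this
      omega
  -- now the liminf argument
  set a : ℕ → ℝ := fun n =>
    (((Finset.range n).filter (fun i => dist (f^[i] x) (f^[i] y) < s)).card : ℝ) / n with hadef
  set b : ℕ → ℝ := fun n =>
    (((Finset.range n).filter (fun j => dist (f^[q j] x) (f^[q j] y) < ε)).card : ℝ) / n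
    with hbdef
  have hb : Filter.liminf b Filter.atTop = 0 := h
  have ha0 : ∀ n, 0 ≤ a n := fun n => div_nonneg (Nat.cast_nonneg _) (Nat.cast_nonneg _)
  have hb0 : ∀ n, 0 ≤ b n := fun n => div_nonneg (Nat.cast_nonneg _) (Nat.cast_nonneg _)
  have ha1 : ∀ n, a n ≤ 1 := by
    intro n
    rcases Nat.eq_zero_or_pos n with h0 | hpos
    · simp [hadef, h0]
    · rw [hadef]
      rw [div_le_one (by exact_mod_cast hpos)]
      exact_mod_cast (Finset.card_le_card (Finset.filter_subset _ _)).trans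
        (le_of_eq (Finset.card_range n))
  show Filter.liminf a Filter.atTop = 0
  have hbddbelow : Filter.IsBoundedUnder (· ≥ ·) Filter.atTop a :=
    isBoundedUnder_of ⟨0, ha0⟩
  have hbbdd : Filter.IsBoundedUnder (· ≥ ·) Filter.atTop b :=
    isBoundedUnder_of ⟨0, hb0⟩
  refine le_antisymm ?_ ?_
  · -- liminf a ≤ 0
    have hstep : ∀ δ : ℝ, 0 < δ → Filter.liminf a Filter.atTop ≤ δ := by
      intro δ hδ
      refine Filter.liminf_le_of_frequently_le ?_ hbddbelow
      rw [Filter.frequently_atTop]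
      intro N'
      set δ' : ℝ := δ / (4 * M) with hδ'def
      have hMpos : (0:ℝ) < M := by exact_mod_cast hM1
      have hδ' : 0 < δ' := by positivity
      obtain ⟨N₂, hN₂⟩ := exists_nat_ge (2 * (q 0 : ℝ) / δ)
      have hb1 : ∀ k, b k ≤ 1 := by
        intro k
        rcases Nat.eq_zero_or_pos k with h0 | hpos
        · simp [hbdef, h0]
        · rw [hbdef]
          rw [div_le_one (by exact_mod_cast hpos)]
          exact_mod_cast (Finset.card_le_card (Finset.filter_subset _ _)).trans
            (le_of_eq (Finset.card_range k))
      have hfreqb : ∃ᶠ m in Filter.atTop, b m < δ' :=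
        Filter.frequently_lt_of_liminf_lt (Filter.isCoboundedUnder_ge_of_le _ hb1)
          (by rw [hb]; exact hδ')
      obtain ⟨m, hmN, hbm⟩ :=
        ((Filter.eventually_ge_atTop (max (N' + M) (max (2 * M) (N₂ + M + 1)))).and_frequently
          hfreqb).exists
      set n := m - M with hndef
      have hm1 : N' + M ≤ m := le_trans (le_max_left _ _) hmN
      have hm2 : 2 * M ≤ m := le_trans (le_trans (le_max_left _ _) (le_max_right _ _)) hmN
      have hm3 : N₂ + M + 1 ≤ m := le_trans (le_trans (le_max_right _ _) (le_max_right _ _)) hmN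
      have hnm : n + M = m := by omega
      refine ⟨n, by omega, ?_⟩
      have hn0 : (0:ℝ) < n := by
        have : 1 ≤ n := by omega
        exact_mod_cast this
      have hm0 : (0:ℝ) < m := by
        have : 1 ≤ m := by omega
        exact_mod_cast this
      -- cast the counting inequality
      have hc := hcount n
      rw [hnm] at hc
      have hcR : (((Finset.range n).filter
            (fun i => dist (f^[i] x) (f^[i] y) < s)).card : ℝ)
          ≤ (q 0 : ℝ) + (M : ℝ) *
            (((Finset.range m).filter
              (fun j => dist (f^[q j] x) (f^[q j] y) < ε)).card : ℝ) := by
        exact_mod_cast hc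
      set cT : ℝ := (((Finset.range m).filter
          (fun j => dist (f^[q j] x) (f^[q j] y) < ε)).card : ℝ) with hcT
      have hTbound : cT < δ' * m := by
        have := hbm
        rw [hbdef] at this
        simpa [hcT, div_lt_iff₀ hm0, mul_comm] using this
      have hTnn : 0 ≤ cT := Nat.cast_nonneg _
      have hmn : (m : ℝ) ≤ 2 * n := by
        have : m ≤ 2 * n := by omega
        exact_mod_cast this
      have hq0 : 2 * (q 0 : ℝ) ≤ δ * n := by
        have hNn : (N₂ : ℝ) ≤ n := by
          have : N₂ ≤ n := by omega
          exact_mod_cast this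
        have := hN₂.trans hNn
        rw [div_le_iff₀ hδ] at this
        linarith
      have hMδ' : (M : ℝ) * δ' = δ / 4 := by
        rw [hδ'def]
        field_simp
      show a n ≤ δ
      rw [hadef, div_le_iff₀ hn0]
      have h1 : (M : ℝ) * cT ≤ (M : ℝ) * (δ' * m) := by
        exact mul_le_mul_of_nonneg_left hTbound.le (le_of_lt hMpos)
      have h2 : (M : ℝ) * (δ' * m) ≤ (M : ℝ) * δ' * (2 * n) := by
        rw [← mul_assoc]
        exact mul_le_mul_of_nonneg_left hmn (by positivity)
      nlinarith [hcR, h1, h2, hMδ', hq0]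
    by_contra hne
    push_neg at hne
    have hhalf := hstep (Filter.liminf a Filter.atTop / 2) (by linarith)
    linarith
  · exact Filter.le_liminf_of_le (Filter.isCoboundedUnder_ge_of_le _ ha1)
      (Filter.Eventually.of_forall ha0)
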